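/- The relation ⊑ on CA^{k,-} defined by: noop is the minimum, and for α = do(φ_A);γ_β and α' = do(φ_{A'});γ_{β'} (reading γ = noop when absent), α ⊐ α' iff (1) A ⊋ A', or (2) A = A' and β ≠ noop and β' = noop, or (3) A = A' and c_β(a) ⊐ c_{β'}(a) for all atoms a — is a strict partial order (irreflexive and transitive) on CA^{k,-}. -/
import Mathlib


noncomputable section

inductive Form (Φ : Type) : Type where
  | tru : Form Φ
  | fls : Form Φ
  | var : Φ → Form Φ
  | neg : Form Φ → Form Φ
  | and : Form Φ → Form Φ → Form Φ
  | or : Form Φ → Form Φ → Form Φ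
deriving DecidableEq

namespace Form
def eval {Φ : Type} (v : Φ → Bool) : Form Φ → Bool
  | tru => true
  | fls => false
  | var p => v p
  | neg φ => !(φ.eval v)
  | and φ ψ => φ.eval v && ψ.eval v
  | or φ ψ => φ.eval v || ψ.eval v

def Valid {Φ : Type} (φ : Form Φ) : Prop := ∀ v, φ.eval v = true
def Equiv {Φ : Type} (φ ψ : Form Φ) : Prop := ∀ v, φ.eval v = ψ.eval v
def imp {Φ : Type} (φ ψ : Form Φ) : Form Φ := .or (.neg φ) ψ
end Form

section Atoms
variable {Φ : Type} [Fintype Φ] [DecidableEq Φ]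

def bigAnd {Φ : Type} (l : List (Form Φ)) : Form Φ := l.foldr .and .tru
def bigOr {Φ : Type} (l : List (Form Φ)) : Form Φ := l.foldr .or .fls

/-- The atom `φ_a` for `a ⊆ Φ`. -/
def atomForm (a : Finset Φ) : Form Φ :=
  .and (bigAnd ((Finset.univ.filter (· ∈ a)).toList.map .var))
       (bigAnd ((Finset.univ.filter (· ∉ a)).toList.map (fun p => .neg (.var p))))

/-- `φ_A`, the disjunction of the atoms in `A`. -/
def disjForm (A : Finset (Finset Φ)) : Form Φ := bigOr (A.toList.map atomForm)

/-- The valuation corresponding to an atom. -/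
def atomVal (a : Finset Φ) : Φ → Bool := fun p => p ∈ a

/-- The set of atoms whose disjunction is equivalent to `φ`. -/
def canonSet (φ : Form Φ) : Finset (Finset Φ) :=
  Finset.univ.filter (fun a => φ.eval (atomVal a) = true)

end Atoms

inductive Act (Φ : Type) : Type where
  | noop : Act Φ
  | doa : Form Φ → Act Φ
  | ite : Form Φ → Act Φ → Act Φ → Act Φ
  | seq : Act Φ → Act Φ → Act Φ
deriving DecidableEq

/-- `HasDepth α k`: α is a depth-`k` action. -/
inductive HasDepth {Φ : Type} : Act Φ → ℕ → Prop where
  | noop : HasDepth .noop 0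
  | up {α k} : HasDepth α k → HasDepth α (k+1)
  | prim {φ} : HasDepth (.doa φ) 1
  | cond {ψ α β k} : HasDepth α (k+1) → HasDepth β (k+1) → HasDepth (.ite ψ α β) (k+1)
  | seq {α β k₁ k₂ m} : HasDepth α k₁ → HasDepth β k₂ → k₁ + k₂ ≤ m → 2 ≤ m →
      HasDepth (.seq α β) m

section Canonical
variable {Φ : Type} [Fintype Φ] [DecidableEq Φ]

/-- A fixed enumeration `a₁, …, a_N` of the atoms. -/
def atomList (Φ : Type) [Fintype Φ] [DecidableEq Φ] : List (Finset Φ) :=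
  (Finset.univ : Finset (Finset Φ)).toList

/-- The nested conditional `if φ_{a₁} then c(a₁) else (… else c(a_N))`,
with trailing `noop`s trimmed. -/
def nestIf (c : Finset Φ → Act Φ) : List (Finset Φ) → Act Φ
  | [] => .noop
  | a :: rest =>
    let r := nestIf c rest
    if c a = .noop ∧ r = .noop then .noop else .ite (atomForm a) (c a) r

/-- The canonical action determined by a canonical map `c`. -/
def gammaOf (c : Finset Φ → Act Φ) : Act Φ := nestIf c (atomList Φ)

def fuelOf {Φ : Type} : Act Φ → ℕ
  | .noop => 1
  | .doa _ => 1
  | .ite _ α β => max (fuelOf α) (fuelOf β)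
  | .seq α β => fuelOf α + fuelOf β

/-- Fueled canonical map. -/
def cmapF : ℕ → Act Φ → Finset Φ → Act Φ
  | _, .noop, _ => .noop
  | _, .doa φ, _ => .doa (disjForm (canonSet φ))
  | n, .ite ψ α β, a => if ψ.eval (atomVal a) = true then cmapF n α a else cmapF n β a
  | 0, .seq _ _, _ => .noop
  | (n+1), .seq α β, a =>
    match cmapF (n+1) α a with
    | .noop => cmapF (n+1) β a
    | .doa ψ => .seq (.doa ψ) (gammaOf (fun b => cmapF n β b))
    | .seq (.doa ψ) γ => .seq (.doa ψ) (gammaOf (fun b => cmapF n (.seq γ β) b))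
    | _ => .noop
  termination_by n α _ => (n, sizeOf α)

/-- The canonical map `c_α`. -/
def cmap (α : Act Φ) : Finset Φ → Act Φ := cmapF (fuelOf α) α

/-- The canonical action `γ_α`. -/
def gammaAct (α : Act Φ) : Act Φ := gammaOf (cmap α)

/-- `F̃ = {φ_A : ∃ φ ∈ F, ⊨ φ_A ↔ φ}`. -/
def FTilde (F : Finset (Form Φ)) : Set (Form Φ) :=
  {ψ | ∃ A : Finset (Finset Φ), ψ = disjForm A ∧ ∃ φ ∈ F, Form.Equiv (disjForm A) φ}

/-- `CA^{k,-}`: depth-`k` actions of the form `noop`, `do(φ_A)`, or `do(φ_A);γ_β`. -/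
def CAminus (F : Finset (Form Φ)) (k : ℕ) : Set (Act Φ) :=
  {α | HasDepth α k ∧
    (α = .noop ∨
     (∃ A : Finset (Finset Φ), α = .doa (disjForm A) ∧ disjForm A ∈ FTilde F) ∨
     (∃ (A : Finset (Finset Φ)) (β : Act Φ),
        α = .seq (.doa (disjForm A)) (gammaAct β) ∧ disjForm A ∈ FTilde F ∧
        HasDepth β (k-1)))}


/-- `CA^{k,-}` (with `do(φ_A);noop` written as `do(φ_A)`). -/
def CAminusI (F : Finset (Form Φ)) (k : ℕ) : Set (Act Φ) :=
  {α | HasDepth α k ∧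
    (α = .noop ∨
     (∃ A : Finset (Finset Φ), α = .doa (disjForm A) ∧ disjForm A ∈ FTilde F) ∨
     (∃ (A : Finset (Finset Φ)) (β : Act Φ),
        α = .seq (.doa (disjForm A)) (gammaAct β) ∧ disjForm A ∈ FTilde F ∧
        HasDepth β (k-1) ∧ gammaAct β ≠ .noop))}

end Canonical


section
variable {Φ : Type} [Fintype Φ] [DecidableEq Φ]

/-- The head `A` of an element of `CA^{k,-}` (as a set of atoms). -/
def headSet : Act Φ → Finset (Finset Φ)
  | .doa φ => canonSet φ
  | .seq (.doa φ) _ => canonSet φ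
  | _ => ∅

/-- The tail `γ_β` of an element of `CA^{k,-}` (`noop` when absent). -/
def tailAct : Act Φ → Act Φ
  | .seq (.doa _) γ => γ
  | _ => .noop

/-- Fueled version of the strict order `⊐` on `CA^{k,-}`. -/
def CAgtF : ℕ → Act Φ → Act Φ → Prop
  | 0, _, _ => False
  | (n+1), α, α' =>
      (α ≠ .noop ∧ α' = .noop) ∨
      (α ≠ .noop ∧ α' ≠ .noop ∧
        (headSet α' ⊂ headSet α ∨
         (headSet α = headSet α' ∧ tailAct α ≠ .noop ∧ tailAct α' = .noop) ∨
         (headSet α = headSet α' ∧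
           ∀ a : Finset Φ, CAgtF n (cmap (tailAct α) a) (cmap (tailAct α') a))))

/-- The strict order `⊐`: `noop` is the minimum; for `α = do(φ_A);γ_β` and
`α' = do(φ_{A'});γ_{β'}`, `α ⊐ α'` iff `A ⊋ A'`, or `A = A'` with `β ≠ noop`
and `β' = noop`, or `A = A'` and `c_β(a) ⊐ c_{β'}(a)` for all atoms `a`. -/
def CAgt (α α' : Act Φ) : Prop := ∃ n, CAgtF n α α'

end

section Aux
variable {Φ : Type} [Fintype Φ] [DecidableEq Φ]

lemma cmap_noop (a : Finset Φ) : cmap (.noop : Act Φ) a = .noop := by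
  simp [cmap, fuelOf, cmapF]

lemma CAgtF_fst_ne_noop : ∀ n {α α' : Act Φ}, CAgtF n α α' → α ≠ .noop
  | 0, _, _, h => h.elim
  | (n+1), _, _, h => by rcases h with ⟨h, _⟩ | ⟨h, _⟩ <;> exact h

lemma CAgtF_snd_cases : ∀ n {α α' : Act Φ}, CAgtF (n+1) α α' →
    α' = .noop ∨ α' ≠ .noop := fun _ _ _ _ => em _

lemma CAgtF_mono : ∀ n {α α' : Act Φ}, CAgtF n α α' → CAgtF (n+1) α α'
  | 0, _, _, h => h.elim
  | (n+1), α, α', h => by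
    rcases h with h | ⟨h1, h2, h3 | h3 | ⟨h3, h4⟩⟩
    · exact Or.inl h
    · exact Or.inr ⟨h1, h2, Or.inl h3⟩
    · exact Or.inr ⟨h1, h2, Or.inr (Or.inl h3)⟩
    · exact Or.inr ⟨h1, h2, Or.inr (Or.inr ⟨h3, fun a => CAgtF_mono n (h4 a)⟩)⟩

lemma CAgtF_mono_le {n m : ℕ} {α α' : Act Φ} (h : n ≤ m) (hg : CAgtF n α α') :
    CAgtF m α α' := by
  induction h with
  | refl => exact hg
  | step _ ih => exact CAgtF_mono _ ih

lemma CAgtF_irrefl : ∀ n (α : Act Φ), ¬ CAgtF n α α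
  | 0, _, h => h
  | (n+1), α, h => by
    rcases h with ⟨h1, h2⟩ | ⟨h1, h2, h3 | h3 | ⟨h3, h4⟩⟩
    · exact h1 h2
    · exact (ssubset_irrefl _) h3
    · exact h3.2.1 h3.2.2
    · exact CAgtF_irrefl n _ (h4 ∅)

lemma CAgtF_trans : ∀ n {α β γ : Act Φ},
    CAgtF n α β → CAgtF n β γ → CAgtF n α γ
  | 0, _, _, _, h, _ => h.elim
  | (n+1), α, β, γ, hab, hbc => by
    have hbne : β ≠ .noop := CAgtF_fst_ne_noop _ hbc
    have hane : α ≠ .noop := CAgtF_fst_ne_noop _ hab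
    rcases hbc with ⟨_, hγ⟩ | ⟨_, hγne, hbc⟩
    · exact Or.inl ⟨hane, hγ⟩
    rcases hab with ⟨_, hβ⟩ | ⟨_, _, hab⟩
    · exact absurd hβ hbne
    refine Or.inr ⟨hane, hγne, ?_⟩
    rcases hab with hab | ⟨heq1, hta, htb⟩ | ⟨heq1, hab⟩
    · rcases hbc with hbc | ⟨heq2, _, _⟩ | ⟨heq2, _⟩
      · exact Or.inl (hbc.trans hab)
      · exact Or.inl (heq2 ▸ hab)
      · exact Or.inl (heq2 ▸ hab)
    · rcases hbc with hbc | ⟨heq2, htb', _⟩ | ⟨heq2, hbc⟩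
      · exact Or.inl (heq1 ▸ hbc)
      · exact absurd htb htb'
      · -- tailAct β = noop, so cmap (tailAct β) a = noop, contradicting CAgtF n noop _
        exfalso
        have := hbc ∅
        rw [htb, cmap_noop] at this
        cases n with
        | zero => exact this
        | succ m => exact CAgtF_fst_ne_noop _ this rfl
    · rcases hbc with hbc | ⟨heq2, htb', htc⟩ | ⟨heq2, hbc⟩
      · exact Or.inl (heq1 ▸ hbc)
      · -- tailAct β ≠ noop, tailAct γ = noop; need tailAct α ≠ noop
        refine Or.inr (Or.inl ⟨heq1.trans heq2, ?_, htc⟩)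
        intro hta
        have := hab ∅
        rw [hta, cmap_noop] at this
        cases n with
        | zero => exact this
        | succ m => exact CAgtF_fst_ne_noop _ this rfl
      · exact Or.inr (Or.inr ⟨heq1.trans heq2,
          fun a => CAgtF_trans n (hab a) (hbc a)⟩)

end Aux

/-- `⊐` is a strict partial order (irreflexive and transitive) on `CA^{k,-}`. -/
theorem CAgt_strict_partial_order {Φ : Type} [Fintype Φ] [DecidableEq Φ]
    (F : Finset (Form Φ)) (k : ℕ) :
    (∀ α ∈ CAminusI F k, ¬ CAgt α α) ∧
    (∀ α β γ : Act Φ, α ∈ CAminusI F k → β ∈ CAminusI F k → γ ∈ CAminusI F k →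
      CAgt α β → CAgt β γ → CAgt α γ) := by
  constructor
  · rintro α - ⟨n, h⟩
    exact CAgtF_irrefl n α h
  · rintro α β γ - - - ⟨n, hab⟩ ⟨m, hbc⟩
    exact ⟨max n m, CAgtF_trans _ (CAgtF_mono_le (le_max_left n m) hab)
      (CAgtF_mono_le (le_max_right n m) hbc)⟩

end
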